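/- Let t ≥ 2 be an integer and set w = t·k − m. Then the first term of the sequence s^w equals t·k, i.e. s^w_0 = t·k. -/

import Mathlib

/-- The shifted modular progression `s^i_j` with parameters `m`, `k`. -/
def smp (m k : ℕ) : ℕ → ℕ → ℕ
  | 0, j => (j * m) % k
  | i + 1, j => if smp m k i j = i then smp m k i j + k else smp m k i j

lemma smp_step (m k : ℕ) (a : ℕ) (ha : smp m k (a * k) 0 = a * k) :
    ∀ r, 1 ≤ r → r ≤ k → smp m k (a * k + r) 0 = a * k + k := by
  intro r
  induction r with
  | zero => omega
  | succ r ih =>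
    intro _ hr
    rcases Nat.eq_zero_or_pos r with h0 | hr1
    · subst h0
      show smp m k (a * k + 1) 0 = a * k + k
      simp [smp, ha]
    · have hih := ih hr1 (by omega)
      have he : a * k + (r + 1) = (a * k + r) + 1 := by ring
      rw [he]
      have hne : a * k + k ≠ a * k + r := by omega
      simp [smp, hih, hne]
      omega

lemma smp_mul (m k : ℕ) (hk : 0 < k) : ∀ a, smp m k (a * k) 0 = a * k := by
  intro a
  induction a with
  | zero => simp [smp]
  | succ a ih =>
    have := smp_step m k a ih k hk le_rfl
    have he : (a + 1) * k = a * k + k := by ring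
    rw [he, this]

theorem stmt_15 (m k : ℕ) (hm : 0 < m) (hk : 0 < k) (hmk : m < k)
    (hgcd : Nat.gcd m k = 1) (t : ℕ) (ht : 2 ≤ t) :
    smp m k (t * k - m) 0 = t * k := by
  obtain ⟨s, rfl⟩ : ∃ s, t = s + 2 := ⟨t - 2, by omega⟩
  have e1 : (s + 2) * k = (s + 1) * k + k := by ring
  have e2 : (s + 2) * k - m = (s + 1) * k + (k - m) := by omega
  rw [e2, smp_step m k (s + 1) (smp_mul m k hk (s + 1)) (k - m) (by omega) (by omega)]
  omega
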